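/- Let G be a connected simple graph with α(G) ≥ 3, and let H be a connected induced subgraph of G with α(H) = α(G) having the minimum number of vertices among all such subgraphs. Let T be any spanning tree of H, and let M be a set of edges ww' of T such that w has degree 1 in T, w' has degree 2 in T, and for every vertex x of G outside V(T), if xw is an edge of G then xw' is an edge of G. Then pc_opt(G) ≤ |E(T)| + Δ(T) − |M|. -/

import Mathlib

/-- A set of vertices is independent: pairwise nonadjacent. -/
def IndepSet {V : Type*} (G : SimpleGraph V) (s : Set V) : Prop :=
  s.Pairwise fun u v => ¬ G.Adj u v

/-- The independence number of a graph: the maximum size of an independent set. -/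
noncomputable def indepNum {V : Type*} (G : SimpleGraph V) : ℕ :=
  sSup {n | ∃ t : Finset V, IndepSet G ↑t ∧ t.card = n}

/-- An edge-colored graph is properly connected if between every pair of distinct
vertices there is a path in which no two consecutive edges have the same color. -/
def ProperlyConnected {V : Type*} (G : SimpleGraph V) (c : Sym2 V → ℕ) : Prop :=
  ∀ u v : V, u ≠ v → ∃ p : G.Walk u v, p.IsPath ∧ (p.edges.map c).Chain' (· ≠ ·)

/-- The optimal proper connection number of a monochromatic graph `G` (all edges
initially colored `1`): the minimum of `p + q` over all final colorings `c` making
`G` properly connected, where `p` is the number of recolored edges (edges whose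
color is no longer `1`) and `q` is the number of distinct new colors used. -/
noncomputable def pcOpt {V : Type*} (G : SimpleGraph V) : ℕ :=
  sInf {n | ∃ c : Sym2 V → ℕ, ProperlyConnected G c ∧
    n = {e | e ∈ G.edgeSet ∧ c e ≠ 1}.ncard
      + (c '' {e | e ∈ G.edgeSet ∧ c e ≠ 1}).ncard}

/-- The degree of a vertex. -/
noncomputable def vdeg {V : Type*} (G : SimpleGraph V) (v : V) : ℕ :=
  (G.neighborSet v).ncard

/-- The maximum degree of a graph. -/
noncomputable def maxDeg {V : Type*} (G : SimpleGraph V) : ℕ :=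
  sSup {n | ∃ v, vdeg G v = n}

/-- A connected graph is α-minimal if every vertex is either a cut-vertex or its
deletion decreases the independence number. -/
def AlphaMinimal {V : Type*} (G : SimpleGraph V) : Prop :=
  G.Connected ∧ ∀ v : V,
    ¬ (G.induce ({v}ᶜ : Set V)).Connected ∨
      indepNum (G.induce ({v}ᶜ : Set V)) < indepNum G






set_option linter.unusedSectionVars false
section Part0
variable {V : Type*} [Fintype V]

lemma indepSet_bdd (G : SimpleGraph V) :
    BddAbove {n | ∃ t : Finset V, IndepSet G ↑t ∧ t.card = n} := by
  refine ⟨Fintype.card V, ?_⟩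
  rintro n ⟨t, -, rfl⟩
  exact Finset.card_le_card (Finset.subset_univ t)

lemma indep_card_le (G : SimpleGraph V) (s : Finset V) (h : IndepSet G ↑s) :
    s.card ≤ indepNum G :=
  le_csSup (indepSet_bdd G) ⟨s, h, rfl⟩

lemma exists_indep_finset (G : SimpleGraph V) :
    ∃ I : Finset V, IndepSet G ↑I ∧ I.card = indepNum G := by
  have h := Nat.sSup_mem (s := {n | ∃ t : Finset V, IndepSet G ↑t ∧ t.card = n})
    ⟨0, ∅, by simp [IndepSet], by simp⟩ (indepSet_bdd G)
  obtain ⟨t, ht, hc⟩ := h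
  exact ⟨t, ht, hc⟩

lemma indepSet_image_coe {W : Set V} (G : SimpleGraph V) (t : Finset ↥W)
    (h : IndepSet (G.induce W) ↑t) :
    IndepSet G ↑(t.map (Function.Embedding.subtype _)) := by
  rintro a ha b hb hab
  simp only [Finset.coe_map, Set.mem_image, Finset.mem_coe] at ha hb
  obtain ⟨a', ha', rfl⟩ := ha
  obtain ⟨b', hb', rfl⟩ := hb
  have : a' ≠ b' := fun e => hab (by rw [e])
  have := h (Finset.mem_coe.mpr ha') (Finset.mem_coe.mpr hb') this
  simpa [SimpleGraph.comap] using this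

lemma card_le_indepNum_induce (G : SimpleGraph V) (W : Set V) (s : Finset V)
    (hsub : ↑s ⊆ W) (h : IndepSet G ↑s) : s.card ≤ indepNum (G.induce W) := by
  classical
  let t : Finset ↥W := s.attach.map
    ⟨fun a => (⟨a.1, hsub a.2⟩ : ↥W), by
      rintro ⟨a, ha⟩ ⟨b, hb⟩ hab
      simpa [Subtype.ext_iff] using hab⟩
  have hcard : t.card = s.card := by simp [t]
  have hind : IndepSet (G.induce W) ↑t := by
    rintro ⟨a, haW⟩ ha ⟨b, hbW⟩ hb hab
    have haS : a ∈ s := by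
      simp only [t, Finset.coe_map, Set.mem_image, Finset.mem_coe, Finset.mem_attach] at ha
      obtain ⟨⟨a', ha'⟩, -, he⟩ := ha
      cases he; exact ha'
    have hbS : b ∈ s := by
      simp only [t, Finset.coe_map, Set.mem_image, Finset.mem_coe, Finset.mem_attach] at hb
      obtain ⟨⟨b', hb'⟩, -, he⟩ := hb
      cases he; exact hb'
    have hne : a ≠ b := fun e => hab (Subtype.ext e)
    have := h (Finset.mem_coe.mpr haS) (Finset.mem_coe.mpr hbS) hne
    simpa [SimpleGraph.comap] using this
  haveI : Fintype ↥W := Fintype.ofFinite ↥W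
  calc s.card = t.card := hcard.symm
    _ ≤ _ := le_csSup (indepSet_bdd (V := ↥W) (G.induce W)) ⟨t, hind, rfl⟩

lemma exists_indep_finset_induce (G : SimpleGraph V) (W : Set V) :
    ∃ I : Finset V, ↑I ⊆ W ∧ IndepSet G ↑I ∧ I.card = indepNum (G.induce W) := by
  haveI : Fintype ↥W := Fintype.ofFinite ↥W
  obtain ⟨t, ht, hc⟩ := exists_indep_finset (G.induce W)
  refine ⟨t.map (Function.Embedding.subtype _), ?_, indepSet_image_coe G t ht, by simpa using hc⟩
  intro a ha
  simp only [Finset.coe_map, Set.mem_image, Finset.mem_coe] at ha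
  obtain ⟨⟨a', haW⟩, -, rfl⟩ := ha
  exact haW

end Part0

section Deg
variable {W : Type*} [Fintype W] (T : SimpleGraph W)

lemma vdeg_le_maxDeg (v : W) : vdeg T v ≤ maxDeg T := by
  refine le_csSup ⟨Fintype.card W, ?_⟩ ⟨v, rfl⟩
  rintro n ⟨u, rfl⟩
  calc vdeg T u ≤ (Set.univ : Set W).ncard := Set.ncard_le_ncard (Set.subset_univ _) (Set.toFinite _)
    _ = Fintype.card W := by simp [Set.ncard_univ]

lemma nbhd_singleton {v b : W} (h1 : vdeg T v = 1) (hadj : T.Adj v b) :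
    T.neighborSet v = {b} := by
  obtain ⟨a, ha⟩ := Set.ncard_eq_one.mp h1
  have : b ∈ T.neighborSet v := hadj
  rw [ha] at this ⊢
  simp only [Set.mem_singleton_iff] at this
  rw [this]

lemma nbhd_pair {v b c : W} (h2 : vdeg T v = 2) (hb : T.Adj v b) (hc : T.Adj v c)
    (hbc : b ≠ c) : T.neighborSet v = {b, c} := by
  have hsub : ({b, c} : Set W) ⊆ T.neighborSet v := by
    rintro x (rfl | rfl); exacts [hb, hc]
  refine (Set.eq_of_subset_of_ncard_le hsub ?_ (Set.toFinite _)).symm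
  rw [Set.ncard_pair hbc]
  exact h2.le
end Deg



lemma two_le_vdeg {W : Type*} [Finite W] (T : SimpleGraph W) {v a b : W} (ha : T.Adj v a)
    (hb : T.Adj v b) (hab : a ≠ b) : 2 ≤ vdeg T v := by
  have hsub : ({a, b} : Set W) ⊆ T.neighborSet v := by
    rintro x (rfl | rfl); exacts [ha, hb]
  calc 2 = ({a, b} : Set W).ncard := (Set.ncard_pair hab).symm
    _ ≤ _ := Set.ncard_le_ncard hsub (Set.toFinite _)

section OpenSG
open SimpleGraph

lemma interior_two_le_vdeg {W : Type*} [Finite W] (T : SimpleGraph W) {a b y : W}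
    (p : T.Walk a b) (hp : p.IsPath) (hy : y ∈ p.support) (hya : y ≠ a) (hyb : y ≠ b) :
    2 ≤ vdeg T y := by
  induction p with
  | nil => simp at hy; exact absurd hy hya
  | @cons u v w h q ih =>
    rw [Walk.support_cons, List.mem_cons] at hy
    rcases hy with rfl | hy
    · exact absurd rfl hya
    by_cases hyv : y = v
    · subst hyv
      cases q with
      | nil => exact absurd rfl hyb
      | @cons v d w h₂ q₂ =>
        have hud : u ≠ d := by
          have h1 := (Walk.cons_isPath_iff h _).mp hp
          intro e
          exact h1.2 (by rw [e, Walk.support_cons]; exact List.mem_cons_of_mem _ q₂.start_mem_support)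
        exact two_le_vdeg T h.symm h₂ hud
    · exact ih ((Walk.cons_isPath_iff h q).mp hp).1 hy hyv hyb

lemma walk_closed {W : Type*} (T : SimpleGraph W) (S : Set W)
    (hS : ∀ s ∈ S, ∀ y, T.Adj s y → y ∈ S) {a b : W} (p : T.Walk a b) (ha : a ∈ S) :
    b ∈ S := by
  induction p with
  | nil => exact ha
  | @cons u v w h q ih => exact ih (hS u ha v h)

lemma chain_of_proper {W : Type*} (T : SimpleGraph W) (cc : Sym2 W → ℕ)
    (hcc : ∀ u b c : W, T.Adj u b → T.Adj b c → u ≠ c → cc s(u, b) ≠ cc s(b, c))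
    {a b : W} (p : T.Walk a b) (hp : p.IsPath) :
    (p.edges.map cc).Chain' (· ≠ ·) := by
  induction p with
  | nil => simp [List.Chain']
  | @cons u v w h q ih =>
    cases q with
    | nil => simp [List.Chain']
    | @cons v d w h₂ q₂ =>
      rw [Walk.edges_cons, Walk.edges_cons, List.map_cons, List.map_cons, List.Chain', List.isChain_cons_cons]
      have hud : u ≠ d := by
        have h1 := (Walk.cons_isPath_iff h _).mp hp
        intro e
        exact h1.2 (by rw [e, Walk.support_cons]; exact List.mem_cons_of_mem _ q₂.start_mem_support)
      refine ⟨hcc _ _ _ h h₂ hud, ?_⟩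
      have := ih ((Walk.cons_isPath_iff h _).mp hp).1
      simpa [List.Chain'] using this

lemma reach_induce {V : Type*} (G : SimpleGraph V) (U W : Set V) (T : SimpleGraph ↥U)
    (hTle : T ≤ G.induce U) {a b : ↥U} (p : T.Walk a b)
    (hsup : ∀ y ∈ p.support, (y : V) ∈ W) (ha : (a : V) ∈ W) (hb : (b : V) ∈ W) :
    (G.induce W).Reachable ⟨a, ha⟩ ⟨b, hb⟩ := by
  induction p with
  | nil => rfl
  | @cons u v w h q ih =>
    have hv : (v : V) ∈ W := hsup v (by rw [Walk.support_cons]; exact List.mem_cons_of_mem _ q.start_mem_support)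
    have hadj : (G.induce W).Adj ⟨u, ha⟩ ⟨v, hv⟩ := by
      have := hTle h
      simp only [comap_adj] at this ⊢
      exact this
    exact (hadj.reachable).trans (ih (fun y hy => hsup y (by rw [Walk.support_cons]; exact List.mem_cons_of_mem _ hy)) hv hb)




open SimpleGraph

set_option linter.unusedSectionVars false

section Tree
variable {W : Type*} [Fintype W] {T : SimpleGraph W} (hT : T.IsTree) (r : W)
  (ord : W → ℕ)

attribute [local instance] Classical.propDecidable

lemma vdeg_le_maxDeg' (T' : SimpleGraph W) (v : W) : vdeg T' v ≤ maxDeg T' := by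
  refine le_csSup ⟨Fintype.card W, ?_⟩ ⟨v, rfl⟩
  rintro n ⟨u, rfl⟩
  calc vdeg T' u ≤ (Set.univ : Set W).ncard :=
        Set.ncard_le_ncard (Set.subset_univ _) (Set.toFinite _)
    _ = Fintype.card W := by simp [Set.ncard_univ]

lemma isPath_concat {u v w : W} {p : T.Walk u v} (hp : p.IsPath) (h : T.Adj v w)
    (hw : w ∉ p.support) : (p.concat h).IsPath := by
  have h1 : ((p.concat h).reverse).IsPath := by
    rw [Walk.reverse_concat]
    rw [Walk.cons_isPath_iff]
    refine ⟨hp.reverse, ?_⟩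
    rw [Walk.support_reverse, List.mem_reverse]
    exact hw
  have := h1.reverse
  rwa [Walk.reverse_reverse] at this

noncomputable def pth (v : W) : T.Walk r v := (hT.existsUnique_path r v).exists.choose

lemma pth_isPath (v : W) : (pth hT r v).IsPath := (hT.existsUnique_path r v).exists.choose_spec

lemma pth_unique {v : W} (q : T.Walk r v) (hq : q.IsPath) : q = pth hT r v :=
  (hT.existsUnique_path r v).unique hq (pth_isPath hT r v)

noncomputable def depth (v : W) : ℕ := (pth hT r v).length

noncomputable def par (v : W) : W := (pth hT r v).reverse.getVert 1

lemma pth_r : pth hT r r = Walk.nil := (pth_unique hT r Walk.nil (by simp)).symm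

lemma par_r : par hT r r = r := by
  unfold par
  rw [pth_r]
  rfl

lemma exists_concat {v : W} (hv : v ≠ r) :
    ∃ (h : T.Adj (par hT r v) v), pth hT r v = (pth hT r (par hT r v)).concat h := by
  have hne : v ≠ r := hv
  obtain ⟨b, hadj, q', hq'⟩ := Walk.exists_eq_cons_of_ne hne (pth hT r v).reverse
  have hrev : pth hT r v = q'.reverse.concat hadj.symm := by
    have := congrArg Walk.reverse hq'
    rw [Walk.reverse_reverse] at this
    rw [this, Walk.reverse_cons, Walk.concat_eq_append]
  have hq'path : q'.reverse.IsPath := by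
    have h1 : ((pth hT r v).reverse).IsPath := (pth_isPath hT r v).reverse
    rw [hq'] at h1
    exact h1.of_cons.reverse
  have hqeq : q'.reverse = pth hT r b := pth_unique hT r _ hq'path
  have hpar : par hT r v = b := by
    unfold par
    rw [hq', Walk.getVert_cons_succ, Walk.getVert_zero]
  subst hpar
  exact ⟨hadj.symm, by rw [hrev, hqeq]⟩

lemma par_adj {v : W} (hv : v ≠ r) : T.Adj (par hT r v) v := (exists_concat hT r hv).1

lemma depth_par {v : W} (hv : v ≠ r) : depth hT r v = depth hT r (par hT r v) + 1 := by
  obtain ⟨h, he⟩ := exists_concat hT r hv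
  unfold depth
  rw [he, Walk.length_concat]

lemma par_eq_of_concat {b v : W} (q : T.Walk r b) (h' : T.Adj b v)
    (he : pth hT r v = q.concat h') : par hT r v = b := by
  unfold par
  rw [he, Walk.reverse_concat, Walk.getVert_cons_succ, Walk.getVert_zero]

lemma par_dichotomy {a b : W} (h : T.Adj a b) : par hT r a = b ∨ par hT r b = a := by
  classical
  by_cases hb : b ∈ (pth hT r a).support
  · left
    have hsplit := (pth hT r a).take_spec hb
    have htake : ((pth hT r a).takeUntil b hb).IsPath := (pth_isPath hT r a).takeUntil hb
    have hdrop : ((pth hT r a).dropUntil b hb).IsPath := by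
      have h1 := pth_isPath hT r a
      rw [← hsplit] at h1
      exact h1.of_append_right
    have hcons : (Walk.cons h.symm Walk.nil : T.Walk b a).IsPath := by
      rw [Walk.cons_isPath_iff]
      refine ⟨by simp, by simp [h.ne']⟩
    have hpath_uniq := SimpleGraph.isAcyclic_iff_path_unique.mp hT.2
    have heq : (⟨(pth hT r a).dropUntil b hb, hdrop⟩ : T.Path b a) =
        ⟨Walk.cons h.symm Walk.nil, hcons⟩ := hpath_uniq _ _
    have heq' : (pth hT r a).dropUntil b hb = Walk.cons h.symm Walk.nil :=
      congrArg Subtype.val heq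
    rw [heq'] at hsplit
    have : pth hT r a = ((pth hT r a).takeUntil b hb).concat h.symm := by
      rw [Walk.concat_eq_append]
      exact hsplit.symm
    have htu : (pth hT r a).takeUntil b hb = pth hT r b := pth_unique hT r _ htake
    rw [htu] at this
    exact par_eq_of_concat hT r _ _ this
  · right
    have hcat : ((pth hT r a).concat h).IsPath := isPath_concat (pth_isPath hT r a) h hb
    have : (pth hT r a).concat h = pth hT r b := pth_unique hT r _ hcat
    exact par_eq_of_concat hT r _ _ this.symm

lemma ne_r_of_par_adj {a b : W} (h : T.Adj a b) (hp : par hT r a = b) : a ≠ r := by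
  intro e
  subst e
  rw [par_r] at hp
  subst hp
  exact h.ne rfl

lemma par_not_both {a b : W} (hab : a ≠ b) (hadj : T.Adj a b) :
    ¬(par hT r a = b ∧ par hT r b = a) := by
  rintro ⟨h1, h2⟩
  have ha : a ≠ r := ne_r_of_par_adj hT r hadj h1
  have hb : b ≠ r := ne_r_of_par_adj hT r hadj.symm h2
  have d1 := depth_par hT r ha
  have d2 := depth_par hT r hb
  rw [h1] at d1
  rw [h2] at d2
  omega

noncomputable def idx (v : W) : ℕ :=
  {u : W | T.Adj (par hT r v) u ∧ u ≠ par hT r (par hT r v) ∧ ord u < ord v}.ncard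

lemma self_mem_sib {v : W} (hv : v ≠ r) :
    T.Adj (par hT r v) v ∧ v ≠ par hT r (par hT r v) := by
  refine ⟨par_adj hT r hv, ?_⟩
  intro e
  exact par_not_both hT r (par_adj hT r hv).ne' (par_adj hT r hv).symm ⟨rfl, e.symm⟩

lemma idx_ne (hord : Function.Injective ord) {u v : W} (hu : u ≠ r) (hv : v ≠ r) (hp : par hT r u = par hT r v)
    (huv : u ≠ v) : idx hT r ord u ≠ idx hT r ord v := by
  have key : ∀ x y : W, x ≠ r → y ≠ r → par hT r x = par hT r y → ord x < ord y →
      idx hT r ord x < idx hT r ord y := by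
    intro x y hx hy hxy hlt
    apply Set.ncard_lt_ncard _ (Set.toFinite _)
    constructor
    · rintro z ⟨h1, h2, h3⟩
      exact ⟨by rwa [← hxy], by rwa [← hxy], h3.trans hlt⟩
    · intro hsub
      have hx' := self_mem_sib hT r hx
      have : x ∈ {u : W | T.Adj (par hT r x) u ∧ u ≠ par hT r (par hT r x) ∧ ord u < ord x} := by
        apply hsub
        exact ⟨by rw [← hxy]; exact hx'.1, by rw [← hxy]; exact hx'.2, hlt⟩
      exact absurd this.2.2 (lt_irrefl _)
  rcases lt_or_gt_of_ne (fun e => huv (hord e)) with hlt | hlt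
  · exact Nat.ne_of_lt (key u v hu hv hp hlt)
  · exact (Nat.ne_of_lt (key v u hv hu hp.symm hlt)).symm

lemma idx_add_one_le {v : W} (hv : v ≠ r) : idx hT r ord v + 1 ≤ vdeg T (par hT r v) := by
  have hm := self_mem_sib hT r hv
  have hnotmem : v ∉ {u : W | T.Adj (par hT r v) u ∧ u ≠ par hT r (par hT r v) ∧ ord u < ord v} :=
    fun h => absurd h.2.2 (lt_irrefl _)
  have : (insert v {u : W | T.Adj (par hT r v) u ∧ u ≠ par hT r (par hT r v) ∧ ord u < ord v}).ncard
      = idx hT r ord v + 1 := Set.ncard_insert_of_notMem hnotmem (Set.toFinite _)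
  rw [← this]
  apply Set.ncard_le_ncard _ (Set.toFinite _)
  rintro z (rfl | ⟨h1, -, -⟩)
  · exact hm.1
  · exact h1

lemma idx_add_two_le {v : W} (hv : v ≠ r) (hp : par hT r v ≠ r) :
    idx hT r ord v + 2 ≤ vdeg T (par hT r v) := by
  set S := {u : W | T.Adj (par hT r v) u ∧ u ≠ par hT r (par hT r v) ∧ ord u < ord v} with hS
  have hm := self_mem_sib hT r hv
  have hpp : T.Adj (par hT r v) (par hT r (par hT r v)) := (par_adj hT r hp).symm
  have hv_ne : v ≠ par hT r (par hT r v) := hm.2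
  have h1 : v ∉ S := fun h => absurd h.2.2 (lt_irrefl _)
  have h2 : par hT r (par hT r v) ∉ S := fun h => absurd rfl h.2.1
  have h2' : par hT r (par hT r v) ∉ insert v S := by
    rintro (h | h)
    · exact hv_ne h.symm
    · exact h2 h
  have hidx : idx hT r ord v = S.ncard := rfl
  have hcard : (insert (par hT r (par hT r v)) (insert v S)).ncard = idx hT r ord v + 2 := by
    rw [Set.ncard_insert_of_notMem h2' (Set.toFinite _),
      Set.ncard_insert_of_notMem h1 (Set.toFinite _), hidx]
  rw [← hcard]
  apply Set.ncard_le_ncard _ (Set.toFinite _)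
  rintro z (rfl | rfl | ⟨g1, -, -⟩)
  · exact hpp
  · exact hm.1
  · exact g1

def skip (a k : ℕ) : ℕ := if k < a then k else k + 1

lemma skip_ne (a k : ℕ) : skip a k ≠ a := by unfold skip; split <;> omega

lemma skip_inj (a : ℕ) {k k' : ℕ} (h : skip a k = skip a k') : k = k' := by
  unfold skip at h; split at h <;> split at h <;> omega

lemma skip_le (a k : ℕ) : skip a k ≤ k + 1 := by unfold skip; split <;> omega

noncomputable def pcf (hT : T.IsTree) (r : W) (ord : W → ℕ) : ℕ → W → ℕ
  | 0, _ => 0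
  | (n+1), v => if par hT r v = r then idx hT r ord v
      else skip (pcf hT r ord n (par hT r v)) (idx hT r ord v)

noncomputable def pc (v : W) : ℕ := pcf hT r ord (depth hT r v) v

lemma pc_eq {v : W} (hv : v ≠ r) :
    pc hT r ord v = if par hT r v = r then idx hT r ord v
      else skip (pc hT r ord (par hT r v)) (idx hT r ord v) := by
  unfold pc
  rw [depth_par hT r hv]
  rfl

lemma pc_lt {v : W} (hv : v ≠ r) : pc hT r ord v < vdeg T (par hT r v) := by
  rw [pc_eq hT r ord hv]
  split
  · have := idx_add_one_le hT r ord hv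
    omega
  · have := idx_add_two_le hT r ord hv (by assumption)
    have := skip_le (pc hT r ord (par hT r v)) (idx hT r ord v)
    omega

lemma pc_ne_par {v : W} (hv : v ≠ r) (hp : par hT r v ≠ r) :
    pc hT r ord v ≠ pc hT r ord (par hT r v) := by
  rw [pc_eq hT r ord hv, if_neg hp]
  exact skip_ne _ _

lemma pc_sib_ne (hord : Function.Injective ord) {u v : W} (hu : u ≠ r) (hv : v ≠ r) (hp : par hT r u = par hT r v)
    (huv : u ≠ v) : pc hT r ord u ≠ pc hT r ord v := by
  rw [pc_eq hT r ord hu, pc_eq hT r ord hv]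
  by_cases hc : par hT r u = r
  · rw [if_pos hc, if_pos (by rwa [← hp])]
    exact idx_ne hT r ord hord hu hv hp huv
  · rw [if_neg hc, if_neg (by rwa [← hp]), hp]
    intro he
    exact idx_ne hT r ord hord hu hv hp huv (skip_inj _ he)

noncomputable def gcol : Sym2 W → ℕ :=
  Sym2.lift ⟨fun a b => if par hT r a = b then pc hT r ord a
      else if par hT r b = a then pc hT r ord b else 0, by
    intro a b
    by_cases hab : a = b
    · subst hab; rfl
    dsimp only
    by_cases h1 : par hT r a = b <;> by_cases h2 : par hT r b = a
    · exfalso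
      have hbr : b ≠ r := by
        intro e; subst e; rw [par_r] at h2; exact hab h2.symm
      have hadj : T.Adj a b := by
        have := par_adj hT r hbr
        rwa [h2] at this
      exact par_not_both hT r hab hadj ⟨h1, h2⟩
    · simp [h1, h2]
    · simp [h1, h2]
    · simp [h1, h2]⟩

lemma gcol_eq₁ {a b : W} (h : par hT r a = b) : gcol hT r ord s(a, b) = pc hT r ord a := by
  unfold gcol
  rw [Sym2.lift_mk]
  simp [h]

lemma gcol_eq₂ {a b : W} (h : par hT r b = a) (h' : par hT r a ≠ b) :
    gcol hT r ord s(a, b) = pc hT r ord b := by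
  unfold gcol
  rw [Sym2.lift_mk]
  simp [h, h']

lemma gcol_proper (hord : Function.Injective ord) {u b c : W} (h1 : T.Adj u b)
    (h2 : T.Adj b c) (huc : u ≠ c) :
    gcol hT r ord s(u, b) ≠ gcol hT r ord s(b, c) := by
  rcases par_dichotomy hT r h1 with hub | hbu
  · have hur : u ≠ r := ne_r_of_par_adj hT r h1 hub
    rcases par_dichotomy hT r h2 with hbc | hcb
    · rw [gcol_eq₁ hT r ord hub, gcol_eq₁ hT r ord hbc]
      have hbr : b ≠ r := ne_r_of_par_adj hT r h2 hbc
      have := pc_ne_par hT r ord hur (by rw [hub]; exact hbr)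
      rwa [hub] at this
    · have hcr : c ≠ r := ne_r_of_par_adj hT r h2.symm hcb
      rw [gcol_eq₁ hT r ord hub,
        gcol_eq₂ hT r ord hcb (fun he => par_not_both hT r h2.ne h2 ⟨he, hcb⟩)]
      exact pc_sib_ne hT r ord hord hur hcr (by rw [hub, hcb]) huc
  · have hbr : b ≠ r := ne_r_of_par_adj hT r h1.symm hbu
    rcases par_dichotomy hT r h2 with hbc | hcb
    · exact absurd (hbu.symm.trans hbc) huc
    · have hcr : c ≠ r := ne_r_of_par_adj hT r h2.symm hcb
      rw [gcol_eq₂ hT r ord hbu (fun he => par_not_both hT r h1.ne h1 ⟨he, hbu⟩),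
        gcol_eq₂ hT r ord hcb (fun he => par_not_both hT r h2.ne h2 ⟨he, hcb⟩)]
      have := pc_ne_par hT r ord hcr (by rw [hcb]; exact hbr)
      rw [hcb] at this
      exact this.symm

lemma gcol_lt {a b : W} (h : T.Adj a b) : gcol hT r ord s(a, b) < maxDeg T := by
  rcases par_dichotomy hT r h with hab | hba
  · rw [gcol_eq₁ hT r ord hab]
    have h1 := pc_lt hT r ord (ne_r_of_par_adj hT r h hab)
    rw [hab] at h1
    exact lt_of_lt_of_le h1 (vdeg_le_maxDeg' T b)
  · rw [gcol_eq₂ hT r ord hba (fun he => par_not_both hT r h.ne h ⟨he, hba⟩)]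
    have h1 := pc_lt hT r ord (ne_r_of_par_adj hT r h.symm hba)
    rw [hba] at h1
    exact lt_of_lt_of_le h1 (vdeg_le_maxDeg' T a)

end Tree

end OpenSG

/-- Key lemma: let `G` be connected with `α(G) ≥ 3`, `H = G.induce U` a minimum
connected induced subgraph with `α(H) = α(G)`, `T` a spanning tree of `H`, and
`M` a set of edges `ww'` of `T` with `deg_T w = 1`, `deg_T w' = 2` such that
every `x ∉ V(T)` adjacent to `w` in `G` is also adjacent to `w'`. Then
`pc_opt(G) ≤ |E(T)| + Δ(T) − |M|`. -/
theorem pcOpt_le_key_lemma {V : Type*} [Fintype V] (G : SimpleGraph V)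
    (hG : G.Connected) (hα : 3 ≤ indepNum G) (U : Set V)
    (hU : (G.induce U).Connected) (hαU : indepNum (G.induce U) = indepNum G)
    (hmin : ∀ W : Set V, (G.induce W).Connected →
      indepNum (G.induce W) = indepNum G → U.ncard ≤ W.ncard)
    (T : SimpleGraph U) (hTle : T ≤ G.induce U) (hT : T.IsTree)
    (M : Set (Sym2 U)) (hME : M ⊆ T.edgeSet)
    (hMprop : ∀ e ∈ M, ∃ w w' : U, e = s(w, w') ∧ vdeg T w = 1 ∧ vdeg T w' = 2 ∧
      ∀ x : V, x ∉ U → G.Adj x ↑w → G.Adj x ↑w') :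
    pcOpt G ≤ T.edgeSet.ncard + maxDeg T - M.ncard := by
  classical
  haveI : Fintype ↥U := Fintype.ofFinite ↥U
  haveI hne : Nonempty ↥U := hU.nonempty
  set r : ↥U := Classical.arbitrary ↥U with hr
  obtain ⟨ord, hord⟩ : ∃ f : ↥U → ℕ, Function.Injective f :=
    ⟨fun u => ((Fintype.equivFin V) ↑u).val,
     fun a b h => Subtype.ext ((Fintype.equivFin V).injective (Fin.val_injective h))⟩
  have hTG : ∀ {a b : ↥U}, T.Adj a b → G.Adj ↑a ↑b := by
    intro a b h
    have := hTle h
    simpa using this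
  let ψ : T →g G := ⟨Subtype.val, fun {a b} h => hTG h⟩
  have hψ : ⇑ψ = Subtype.val := rfl
  have hψinj : Function.Injective ⇑ψ := Subtype.val_injective
  have hMadj : ∀ {a b : ↥U}, s(a, b) ∈ M → T.Adj a b := by
    intro a b h
    exact T.mem_edgeSet.mp (hME h)
  have hswap : ∀ {a b : ↥U}, s(a, b) ∈ M → s(b, a) ∈ M := by
    intro a b h; rwa [Sym2.eq_swap] at h
  have hMshape : ∀ {a b : ↥U}, s(a, b) ∈ M →
      (vdeg T a = 1 ∧ vdeg T b = 2 ∧ ∀ x : V, x ∉ U → G.Adj x ↑a → G.Adj x ↑b) ∨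
      (vdeg T b = 1 ∧ vdeg T a = 2 ∧ ∀ x : V, x ∉ U → G.Adj x ↑b → G.Adj x ↑a) := by
    intro a b h
    obtain ⟨w, w', he, h1, h2, h3⟩ := hMprop _ h
    rw [Sym2.eq_iff] at he
    rcases he with ⟨rfl, rfl⟩ | ⟨rfl, rfl⟩
    · exact Or.inl ⟨h1, h2, h3⟩
    · exact Or.inr ⟨h1, h2, h3⟩
  set MLeaf : ↥U → Prop := fun a => vdeg T a = 1 ∧ ∃ b, s(a, b) ∈ M with hMLeafDef
  have hMLeaf_partner : ∀ {a b : ↥U}, s(a, b) ∈ M → vdeg T a = 1 →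
      vdeg T b = 2 ∧ ∀ x : V, x ∉ U → G.Adj x ↑a → G.Adj x ↑b := by
    intro a b h h1
    rcases hMshape h with ⟨g1, g2, g3⟩ | ⟨g1, g2, g3⟩
    · exact ⟨g2, g3⟩
    · rw [h1] at g2; omega
  -- independent set machinery
  have hIex : ∃ I : Finset V, ↑I ⊆ U ∧ IndepSet G ↑I ∧ I.card = indepNum G := by
    obtain ⟨I, h1, h2, h3⟩ := exists_indep_finset_induce G U
    exact ⟨I, h1, h2, by rwa [hαU] at h3⟩
  -- disjointness of M edges
  have hMM : ∀ {a b c : ↥U}, s(a, b) ∈ M → s(a, c) ∈ M → b = c := by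
    intro a b c hab hac
    by_cases hbc : b = c
    · exact hbc
    exfalso
    have hadj_ab : T.Adj a b := hMadj hab
    have hadj_ac : T.Adj a c := hMadj hac
    by_cases hdeg : vdeg T a = 1
    · have h1 := nbhd_singleton T hdeg hadj_ab
      have h2 : c ∈ T.neighborSet a := hadj_ac
      rw [h1, Set.mem_singleton_iff] at h2
      exact hbc h2.symm
    · have hsa : vdeg T a = 2 ∧ vdeg T b = 1 := by
        rcases hMshape hab with ⟨h1, h2, -⟩ | ⟨h1, h2, -⟩
        · exact absurd h1 hdeg
        · exact ⟨h2, h1⟩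
      have hsc : vdeg T c = 1 := by
        rcases hMshape hac with ⟨h1, h2, -⟩ | ⟨h1, h2, -⟩
        · exact absurd h1 hdeg
        · exact h1
      have hnb : T.neighborSet a = {b, c} := nbhd_pair T hsa.1 hadj_ab hadj_ac hbc
      have hnbb : T.neighborSet b = {a} := nbhd_singleton T hsa.2 hadj_ab.symm
      have hnbc : T.neighborSet c = {a} := nbhd_singleton T hsc hadj_ac.symm
      have hclosed : ∀ z ∈ ({a, b, c} : Set ↥U), ∀ y, T.Adj z y →
          y ∈ ({a, b, c} : Set ↥U) := by
        rintro z (rfl | rfl | rfl) y hy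
        · have h2 : y ∈ T.neighborSet z := hy
          rw [hnb] at h2
          rcases h2 with rfl | rfl
          · exact Or.inr (Or.inl rfl)
          · exact Or.inr (Or.inr rfl)
        · have h2 : y ∈ T.neighborSet z := hy
          rw [hnbb, Set.mem_singleton_iff] at h2
          exact Or.inl h2
        · have h2 : y ∈ T.neighborSet z := hy
          rw [hnbc, Set.mem_singleton_iff] at h2
          exact Or.inl h2
      have hall : ∀ y : ↥U, y ∈ ({a, b, c} : Set ↥U) := by
        intro y
        obtain ⟨p⟩ := hT.1.preconnected a y
        exact walk_closed T _ hclosed p (Or.inl rfl)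
      obtain ⟨I, hIU, hIind, hIcard⟩ := hIex
      have hIsub : I ⊆ ({↑a, ↑b, ↑c} : Finset V) := by
        intro w hw
        have h2 := hall ⟨w, hIU hw⟩
        rcases h2 with h2 | h2 | h2 <;>
          simp [Finset.mem_insert, ← congrArg Subtype.val h2]
      have hc3 : ({↑a, ↑b, ↑c} : Finset V).card ≤ 3 := by
        apply le_trans (Finset.card_insert_le _ _)
        have := Finset.card_insert_le (↑b : V) ({↑c} : Finset V)
        simp at this ⊢
        omega
      have hIeq : I = ({↑a, ↑b, ↑c} : Finset V) := by
        apply Finset.eq_of_subset_of_card_le hIsub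
        rw [hIcard]
        omega
      have haI : (↑a : V) ∈ I := by rw [hIeq]; simp
      have hbI : (↑b : V) ∈ I := by rw [hIeq]; simp
      have hab' : (↑a : V) ≠ ↑b := fun e => hadj_ab.ne (Subtype.ext e)
      exact hIind haI hbI hab' (hTG hadj_ab)
  have hL1 : ∀ x : V, x ∉ U → ∃ u : ↥U, G.Adj x ↑u := by
    intro x hx
    by_contra hcon
    push_neg at hcon
    obtain ⟨I, hIU, hIind, hIcard⟩ := hIex
    have hxI : x ∉ I := fun h => hx (hIU h)
    have hbig : IndepSet G ↑(insert x I) := by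
      unfold IndepSet
      rw [Finset.coe_insert, Set.pairwise_insert]
      refine ⟨hIind, ?_⟩
      intro b hb _
      constructor
      · exact fun hadj => (hcon ⟨b, hIU hb⟩) hadj
      · exact fun hadj => (hcon ⟨b, hIU hb⟩) hadj.symm
    have hle := indep_card_le G _ hbig
    rw [Finset.card_insert_of_notMem hxI, hIcard] at hle
    omega
  have hL3 : ∀ (ℓ : ↥U), vdeg T ℓ = 1 → ∀ I : Finset V, ↑I ⊆ U → IndepSet G ↑I →
      I.card = indepNum G → ↑ℓ ∈ I := by
    intro ℓ hdeg I hIU hIind hIcard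
    by_contra hmem
    set Wl : Set V := U \ {(↑ℓ : V)} with hWl
    have hsubW : ∀ s : ↥U, s ≠ ℓ → (↑s : V) ∈ Wl := by
      intro s hs
      exact ⟨s.2, fun hc => hs (Subtype.ext hc)⟩
    have hconn : (G.induce Wl).Connected := by
      rw [SimpleGraph.connected_iff]
      constructor
      · intro y z
        have hyU : (y : V) ∈ U := y.2.1
        have hzU : (z : V) ∈ U := z.2.1
        obtain ⟨p₀⟩ := hT.1.preconnected ⟨y.1, hyU⟩ ⟨z.1, hzU⟩
        have hpp : p₀.bypass.IsPath := SimpleGraph.Walk.bypass_isPath p₀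
        have hℓnot : ∀ s ∈ p₀.bypass.support, s ≠ ℓ := by
          intro s hs hcontra
          subst hcontra
          by_cases h1 : s = (⟨y.1, hyU⟩ : ↥U)
          · exact y.2.2 (show (↑y : V) ∈ ({(↑s : V)} : Set V) by rw [h1]; exact rfl)
          · by_cases h2 : s = (⟨z.1, hzU⟩ : ↥U)
            · exact z.2.2 (show (↑z : V) ∈ ({(↑s : V)} : Set V) by rw [h2]; exact rfl)
            · have := interior_two_le_vdeg T p₀.bypass hpp hs h1 h2
              rw [hdeg] at this
              omega
        have hreach := reach_induce G U Wl T hTle p₀.bypass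
          (fun s hs => hsubW s (hℓnot s hs)) y.2 z.2
        exact hreach
      · have hpos : 0 < I.card := by rw [hIcard]; omega
        obtain ⟨w, hw⟩ := Finset.card_pos.mp hpos
        refine ⟨⟨w, hIU hw, ?_⟩⟩
        intro hc
        rw [Set.mem_singleton_iff] at hc
        rw [hc] at hw
        exact hmem hw
    have h1 : I.card ≤ indepNum (G.induce Wl) := by
      apply card_le_indepNum_induce G Wl I _ hIind
      intro w hw
      refine ⟨hIU hw, ?_⟩
      intro hc
      rw [Set.mem_singleton_iff] at hc
      rw [hc] at hw
      exact hmem hw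
    have h2 : indepNum (G.induce Wl) ≤ indepNum G := by
      obtain ⟨J, hJ1, hJ2, hJ3⟩ := exists_indep_finset_induce G Wl
      rw [← hJ3]
      exact indep_card_le G J hJ2
    have heq : indepNum (G.induce Wl) = indepNum G := le_antisymm h2 (hIcard ▸ h1)
    have hle := hmin Wl hconn heq
    have hlt : Wl.ncard < U.ncard := by
      apply Set.ncard_lt_ncard _ (Set.toFinite _)
      constructor
      · exact Set.diff_subset
      · intro hsub
        exact (hsub ℓ.2).2 rfl
    omega
  have hA : ∀ x : V, x ∉ U → ∃ a : ↥U, G.Adj x ↑a ∧ ¬MLeaf a := by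
    intro x hx
    obtain ⟨u, hu⟩ := hL1 x hx
    by_cases hml : MLeaf u
    · obtain ⟨h1, b, hb⟩ := hml
      have hp := hMLeaf_partner hb h1
      refine ⟨b, hp.2 x hx hu, ?_⟩
      intro hml2
      rw [hMLeafDef] at hml2
      rw [hml2.1] at hp
      omega
    · exact ⟨u, hu, hml⟩
  have hA' : ∀ x : V, x ∉ U → ∀ v : ↥U, ¬ G.Adj x ↑v →
      ∃ a : ↥U, G.Adj x ↑a ∧ ¬MLeaf a ∧ a ≠ v ∧ s(a, v) ∉ M := by
    intro x hx v hxv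
    obtain ⟨a₀, hxa₀, hML₀⟩ := hA x hx
    have ha₀v : a₀ ≠ v := fun e => hxv (e ▸ hxa₀)
    by_cases hM₀ : s(a₀, v) ∈ M
    · have hv1 : vdeg T v = 1 ∧ vdeg T a₀ = 2 := by
        rcases hMshape hM₀ with ⟨h1, h2, -⟩ | ⟨h1, h2, -⟩
        · exact absurd ⟨h1, v, hM₀⟩ hML₀
        · exact ⟨h1, h2⟩
      have hadj₀ : T.Adj a₀ v := hMadj hM₀
      have hsub2 : ∃ u₁ : ↥U, G.Adj x ↑u₁ ∧ u₁ ≠ a₀ ∧ u₁ ≠ v := by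
        by_contra hcon
        push_neg at hcon
        obtain ⟨I, hIU, hIind, hIcard⟩ := hIex
        have hvI : ↑v ∈ I := hL3 v hv1.1 I hIU hIind hIcard
        have ha₀I : (↑a₀ : V) ∉ I := by
          intro hmem2
          exact hIind hmem2 hvI (fun e => ha₀v (Subtype.ext e)) (hTG hadj₀)
        have hxI : x ∉ I := fun h => hx (hIU h)
        have hbig : IndepSet G ↑(insert x I) := by
          unfold IndepSet
          rw [Finset.coe_insert, Set.pairwise_insert]
          refine ⟨hIind, ?_⟩
          intro b hb _
          have hnadj : ¬ G.Adj x b := by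
            intro hadj
            have hb2 := hcon ⟨b, hIU hb⟩ hadj
            by_cases he : (⟨b, hIU hb⟩ : ↥U) = a₀
            · exact ha₀I (by rw [← congrArg Subtype.val he]; exact hb)
            · exact hxv (by rw [← congrArg Subtype.val (hb2 he)] at hxv ⊢; exact hadj)
          exact ⟨hnadj, fun h => hnadj h.symm⟩
        have hle := indep_card_le G _ hbig
        rw [Finset.card_insert_of_notMem hxI, hIcard] at hle
        omega
      obtain ⟨u₁, hxu₁, hu₁a₀, hu₁v⟩ := hsub2
      by_cases hMLu₁ : MLeaf u₁
      · obtain ⟨hdeg₁, c, hc⟩ := hMLu₁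
        have hcpart := hMLeaf_partner hc hdeg₁
        have hxc : G.Adj x ↑c := hcpart.2 x hx hxu₁
        have hML_c : ¬MLeaf c := by
          intro hml
          rw [hMLeafDef] at hml
          rw [hml.1] at hcpart
          omega
        have hca₀ : c ≠ a₀ := by
          intro e
          subst e
          exact hu₁v (hMM (hswap hc) hM₀)
        have hcv : c ≠ v := by
          intro e
          rw [e] at hcpart
          rw [hv1.1] at hcpart
          omega
        have hMcv : s(c, v) ∉ M := by
          intro hmem2
          exact hca₀ (hMM (hswap hmem2) (hswap hM₀))
        exact ⟨c, hxc, hML_c, hcv, hMcv⟩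
      · have hMu₁v : s(u₁, v) ∉ M := by
          intro hmem2
          exact hu₁a₀ (hMM (hswap hmem2) (hswap hM₀))
        exact ⟨u₁, hxu₁, hMLu₁, hu₁v, hMu₁v⟩
    · exact ⟨a₀, hxa₀, hML₀, ha₀v, hM₀⟩
  -- helper: replacement anchor
  have hrepl : ∀ (x : V), x ∉ U → ∀ (a u₁ : ↥U), G.Adj x ↑u₁ → u₁ ≠ a → s(u₁, a) ∉ M →
      ∃ b : ↥U, G.Adj x ↑b ∧ ¬MLeaf b ∧ b ≠ a := by
    intro x hx a u₁ h1 h2 h3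
    by_cases hml : MLeaf u₁
    · obtain ⟨hdeg, c, hc⟩ := hml
      have hcpart := hMLeaf_partner hc hdeg
      have hxc : G.Adj x ↑c := hcpart.2 x hx h1
      have hML_c : ¬MLeaf c := by
        intro hml2
        rw [hMLeafDef] at hml2
        rw [hml2.1] at hcpart
        omega
      have hca : c ≠ a := by
        intro e
        subst e
        exact h3 hc
      exact ⟨c, hxc, hML_c, hca⟩
    · exact ⟨u₁, h1, hml, h2⟩
  have hB : ∀ x x' : V, x ∉ U → x' ∉ U → x ≠ x' → ¬G.Adj x x' →
      ∃ a a' : ↥U, G.Adj x ↑a ∧ G.Adj x' ↑a' ∧ ¬MLeaf a ∧ ¬MLeaf a' ∧ a ≠ a' := by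
    intro x x' hx hx' hxx' hnadj
    obtain ⟨a, hxa, hMLa⟩ := hA x hx
    obtain ⟨a', hxa', hMLa'⟩ := hA x' hx'
    by_cases he : a = a'
    · subst he
      by_cases hi : ∃ u₁ : ↥U, G.Adj x ↑u₁ ∧ u₁ ≠ a ∧ s(u₁, a) ∉ M
      · obtain ⟨u₁, h1, h2, h3⟩ := hi
        obtain ⟨b, hb1, hb2, hb3⟩ := hrepl x hx a u₁ h1 h2 h3
        exact ⟨b, a, hb1, hxa', hb2, hMLa, hb3⟩
      · by_cases hii : ∃ u₁ : ↥U, G.Adj x' ↑u₁ ∧ u₁ ≠ a ∧ s(u₁, a) ∉ M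
        · obtain ⟨u₁, h1, h2, h3⟩ := hii
          obtain ⟨b, hb1, hb2, hb3⟩ := hrepl x' hx' a u₁ h1 h2 h3
          exact ⟨a, b, hxa, hb1, hMLa, hb2, fun e => hb3 e.symm⟩
        · exfalso
          push_neg at hi hii
          obtain ⟨I, hIU, hIind, hIcard⟩ := hIex
          -- whether there is an M-edge at a
          by_cases hex : ∃ ℓ : ↥U, s(ℓ, a) ∈ M
          · obtain ⟨ℓ, hℓ⟩ := hex
            have hdegℓ : vdeg T ℓ = 1 := by
              rcases hMshape hℓ with ⟨g1, -, -⟩ | ⟨g1, -, -⟩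
              · exact g1
              · exact absurd ⟨g1, ℓ, hswap hℓ⟩ hMLa
            have hℓI : (↑ℓ : V) ∈ I := hL3 ℓ hdegℓ I hIU hIind hIcard
            have haI : (↑a : V) ∉ I := by
              intro hmem2
              exact hIind hℓI hmem2
                (fun e => (hMadj hℓ).ne (Subtype.ext e)) (hTG (hMadj hℓ))
            -- generic: any U-neighbor of x or x' in I minus ℓ leads to contradiction
            have hnogood : ∀ (z : V) (hz : z ∉ U),
                (∀ u₁ : ↥U, G.Adj z ↑u₁ → u₁ ≠ a → s(u₁, a) ∈ M) →
                ∀ b ∈ I.erase ↑ℓ, ¬ G.Adj z b := by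
              intro z hz hcon b hb hadj
              have hbI := Finset.mem_of_mem_erase hb
              have hbU : b ∈ U := hIU hbI
              by_cases hba : (⟨b, hbU⟩ : ↥U) = a
              · exact haI (by rw [← congrArg Subtype.val hba]; exact hbI)
              · have hM1 := hcon ⟨b, hbU⟩ hadj hba
                have : (⟨b, hbU⟩ : ↥U) = ℓ := hMM (hswap hM1) (hswap hℓ)
                exact (Finset.ne_of_mem_erase hb) (congrArg Subtype.val this)
            set K := I.erase (↑ℓ : V) with hK
            have hx'K : x' ∉ K := fun h => hx' (hIU (Finset.mem_of_mem_erase h))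
            have hxK : x ∉ insert x' K := by
              intro h
              rcases Finset.mem_insert.mp h with h | h
              · exact hxx' h
              · exact hx (hIU (Finset.mem_of_mem_erase h))
            have hbig : IndepSet G ↑(insert x (insert x' K)) := by
              unfold IndepSet
              rw [Finset.coe_insert, Set.pairwise_insert]
              constructor
              · rw [Finset.coe_insert, Set.pairwise_insert]
                constructor
                · exact Set.Pairwise.mono
                    (Finset.coe_subset.mpr (Finset.erase_subset _ _)) hIind
                · intro b hb _
                  have hnadjb : ¬ G.Adj x' b := hnogood x' hx' hii b hb
                  exact ⟨hnadjb, fun h => hnadjb h.symm⟩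
              · intro b hb _
                rw [Finset.coe_insert] at hb
                rcases hb with rfl | hb
                · exact ⟨hnadj, fun h => hnadj h.symm⟩
                · have hnadjb : ¬ G.Adj x b := hnogood x hx hi b hb
                  exact ⟨hnadjb, fun h => hnadjb h.symm⟩
            have hle := indep_card_le G _ hbig
            rw [Finset.card_insert_of_notMem hxK,
              Finset.card_insert_of_notMem hx'K, hK,
              Finset.card_erase_of_mem hℓI, hIcard] at hle
            omega
          · push_neg at hex
            set K := I.erase (↑a : V) with hK
            have hnogood : ∀ (z : V) (hz : z ∉ U),
                (∀ u₁ : ↥U, G.Adj z ↑u₁ → u₁ ≠ a → s(u₁, a) ∈ M) →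
                ∀ b ∈ K, ¬ G.Adj z b := by
              intro z hz hcon b hb hadj
              have hbI := Finset.mem_of_mem_erase hb
              have hbU : b ∈ U := hIU hbI
              by_cases hba : (⟨b, hbU⟩ : ↥U) = a
              · exact (Finset.ne_of_mem_erase hb) (congrArg Subtype.val hba)
              · exact hex ⟨b, hbU⟩ (hcon ⟨b, hbU⟩ hadj hba)
            have hx'K : x' ∉ K := fun h => hx' (hIU (Finset.mem_of_mem_erase h))
            have hxK : x ∉ insert x' K := by
              intro h
              rcases Finset.mem_insert.mp h with h | h
              · exact hxx' h
              · exact hx (hIU (Finset.mem_of_mem_erase h))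
            have hbig : IndepSet G ↑(insert x (insert x' K)) := by
              unfold IndepSet
              rw [Finset.coe_insert, Set.pairwise_insert]
              constructor
              · rw [Finset.coe_insert, Set.pairwise_insert]
                constructor
                · exact Set.Pairwise.mono
                    (Finset.coe_subset.mpr (Finset.erase_subset _ _)) hIind
                · intro b hb _
                  have hnadjb : ¬ G.Adj x' b := hnogood x' hx' hii b hb
                  exact ⟨hnadjb, fun h => hnadjb h.symm⟩
              · intro b hb _
                rw [Finset.coe_insert] at hb
                rcases hb with rfl | hb
                · exact ⟨hnadj, fun h => hnadj h.symm⟩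
                · have hnadjb : ¬ G.Adj x b := hnogood x hx hi b hb
                  exact ⟨hnadjb, fun h => hnadjb h.symm⟩
            have hle := indep_card_le G _ hbig
            have hKcard : I.card - 1 ≤ K.card := by
              rw [hK]
              by_cases hmem2 : (↑a : V) ∈ I
              · rw [Finset.card_erase_of_mem hmem2]
              · rw [Finset.erase_eq_of_notMem hmem2]
                omega
            rw [Finset.card_insert_of_notMem hxK,
              Finset.card_insert_of_notMem hx'K] at hle
            rw [hIcard] at hKcard
            omega
    · exact ⟨a, a', hxa, hxa', hMLa, hMLa', he⟩
  -- first-edge lemma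
  have hFE : ∀ {a b v : ↥U} (h : T.Adj a b) (q : T.Walk b v),
      (SimpleGraph.Walk.cons h q).IsPath → ¬MLeaf a → s(a, v) ∉ M → s(a, b) ∉ M := by
    intro a b v h q hp hML hav hab
    rcases hMshape hab with ⟨h1, -, -⟩ | ⟨h1, -, -⟩
    · exact hML ⟨h1, b, hab⟩
    · have hnb : T.neighborSet b = {a} := nbhd_singleton T h1 h.symm
      cases q with
      | nil => exact hav hab
      | @cons _ d _ h₃ q₃ =>
        have hd : d ∈ T.neighborSet b := h₃
        rw [hnb, Set.mem_singleton_iff] at hd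
        have hp2 := (SimpleGraph.Walk.cons_isPath_iff h _).mp hp
        apply hp2.2
        rw [SimpleGraph.Walk.support_cons]
        exact List.mem_cons_of_mem _ (hd ▸ q₃.start_mem_support)
  -- the coloring
  set cU : Sym2 ↥U → ℕ :=
    fun e => if e ∈ T.edgeSet ∧ e ∉ M then gcol hT r ord e + 2 else 1 with hcUdef
  set cV : Sym2 V → ℕ :=
    fun e => if h : ∃ e' : Sym2 ↥U, Sym2.map Subtype.val e' = e then cU h.choose else 1
    with hcVdef
  have hmapinj : Function.Injective (Sym2.map (Subtype.val : ↥U → V)) :=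
    Sym2.map.injective Subtype.val_injective
  have hcV_map : ∀ e' : Sym2 ↥U, cV (Sym2.map Subtype.val e') = cU e' := by
    intro e'
    have hex : ∃ e'' : Sym2 ↥U, Sym2.map Subtype.val e'' = Sym2.map Subtype.val e' := ⟨e', rfl⟩
    rw [hcVdef]
    simp only [dif_pos hex]
    congr 1
    exact hmapinj hex.choose_spec
  have hcV_out : ∀ (x y : V), x ∉ U → cV s(x, y) = 1 := by
    intro x y hx
    rw [hcVdef]
    simp only
    rw [dif_neg]
    rintro ⟨e', he'⟩
    have : x ∈ Sym2.map Subtype.val e' := by rw [he']; exact Sym2.mem_mk_left x y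
    rw [Sym2.mem_map] at this
    obtain ⟨c, -, hc⟩ := this
    exact hx (hc ▸ c.2)
  have hcU_M : ∀ {e : Sym2 ↥U}, e ∈ M → cU e = 1 := by
    intro e he
    simp only [hcUdef]
    exact if_neg (fun hc => hc.2 he)
  have hcU_in : ∀ {e : Sym2 ↥U}, e ∈ T.edgeSet → e ∉ M → cU e = gcol hT r ord e + 2 := by
    intro e h1 h2
    simp only [hcUdef]
    exact if_pos ⟨h1, h2⟩
  have hcU_out : ∀ {e : Sym2 ↥U}, e ∉ T.edgeSet → cU e = 1 := by
    intro e h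
    simp only [hcUdef]
    exact if_neg (fun hc => h hc.1)
  have hcU_proper : ∀ u b c : ↥U, T.Adj u b → T.Adj b c → u ≠ c →
      cU s(u, b) ≠ cU s(b, c) := by
    intro u b c h1 h2 huc
    by_cases m1 : s(u, b) ∈ M <;> by_cases m2 : s(b, c) ∈ M
    · exact absurd (hMM (hswap m1) m2) huc
    · rw [hcU_M m1, hcU_in (T.mem_edgeSet.mpr h2) m2]
      omega
    · rw [hcU_M m2, hcU_in (T.mem_edgeSet.mpr h1) m1]
      omega
    · rw [hcU_in (T.mem_edgeSet.mpr h1) m1, hcU_in (T.mem_edgeSet.mpr h2) m2]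
      have := gcol_proper hT r ord hord h1 h2 huc
      omega
  have hpathex : ∀ a b : ↥U, ∃ p : T.Walk a b, p.IsPath := fun a b =>
    (hT.existsUnique_path a b).exists
  -- mapped walk edge colors
  have hmapcol : ∀ {a b : ↥U} (p : T.Walk a b),
      ((p.map ψ).edges.map cV) = p.edges.map cU := by
    intro a b p
    rw [SimpleGraph.Walk.edges_map, List.map_map]
    apply List.map_congr_left
    intro e he
    exact hcV_map e
  -- properly connected
  have hPC : ProperlyConnected G cV := by
    have inner_chain : ∀ {a b : ↥U} (p : T.Walk a b), p.IsPath →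
        ((p.map ψ).edges.map cV).Chain' (· ≠ ·) := by
      intro a b p hp
      rw [hmapcol p]
      exact chain_of_proper T cU hcU_proper p hp
    have head_col : ∀ {a v : ↥U} (p : T.Walk a v), p.IsPath → ¬MLeaf a → s(a, v) ∉ M →
        ∀ y ∈ (p.edges.map cU).head?, y ≠ 1 := by
      intro a v p hp hML hav y hy
      cases p with
      | nil => simp at hy
      | @cons _ d _ h₃ q₃ =>
        rw [SimpleGraph.Walk.edges_cons, List.map_cons, List.head?_cons,
          Option.mem_some_iff] at hy
        have hnot : s(a, d) ∉ M := hFE h₃ q₃ hp hML hav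
        rw [← hy, hcU_in (T.mem_edgeSet.mpr h₃) hnot]
        omega
    have single_edge : ∀ {y z : V}, G.Adj y z →
        ∃ p : G.Walk y z, p.IsPath ∧ (p.edges.map cV).Chain' (· ≠ ·) := by
      intro y z hadj
      refine ⟨SimpleGraph.Walk.cons hadj SimpleGraph.Walk.nil, ?_, ?_⟩
      · rw [SimpleGraph.Walk.isPath_def, SimpleGraph.Walk.support_cons,
          SimpleGraph.Walk.support_nil]
        simp [hadj.ne]
      · simp [List.Chain']
    have key2 : ∀ (x : V), x ∉ U → ∀ (v0 : ↥U), x ≠ ↑v0 →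
        ∃ p : G.Walk x ↑v0, p.IsPath ∧ (p.edges.map cV).Chain' (· ≠ ·) := by
      intro x hx v0 hxv0
      by_cases hadj : G.Adj x ↑v0
      · exact single_edge hadj
      · obtain ⟨a, hxa, hMLa, hav0, hMav0⟩ := hA' x hx v0 hadj
        obtain ⟨p, hp⟩ := hpathex a v0
        refine ⟨SimpleGraph.Walk.cons hxa (p.map ψ), ?_, ?_⟩
        · rw [SimpleGraph.Walk.cons_isPath_iff]
          refine ⟨SimpleGraph.Walk.map_isPath_of_injective hψinj hp, ?_⟩
          rw [SimpleGraph.Walk.support_map]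
          intro hmem
          rw [List.mem_map] at hmem
          obtain ⟨t, -, ht⟩ := hmem
          exact hx (ht ▸ t.2)
        · rw [SimpleGraph.Walk.edges_cons, List.map_cons, List.Chain', List.isChain_cons]
          constructor
          · intro y hy
            rw [hmapcol p] at hy
            have hy1 := head_col p hp hMLa hMav0 y hy
            rw [hcV_out x ↑a hx]
            exact fun e => hy1 e.symm
          · exact inner_chain p hp
    have key3 : ∀ (x x' : V), x ∉ U → x' ∉ U → x ≠ x' →
        ∃ p : G.Walk x x', p.IsPath ∧ (p.edges.map cV).Chain' (· ≠ ·) := by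
      intro x x' hx hx' hxx'
      by_cases hadj : G.Adj x x'
      · exact single_edge hadj
      · obtain ⟨a, a', hxa, hxa', hMLa, hMLa', haa'⟩ := hB x x' hx hx' hxx' hadj
        obtain ⟨p, hp⟩ := hpathex a a'
        have hMaa' : s(a, a') ∉ M := by
          intro hmem
          rcases hMshape hmem with ⟨h1, -, -⟩ | ⟨h1, -, -⟩
          · exact hMLa ⟨h1, a', hmem⟩
          · exact hMLa' ⟨h1, a, hswap hmem⟩
        have hhead : ∀ y ∈ (p.edges.map cU).head?, y ≠ 1 :=
          head_col p hp hMLa hMaa'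
        have hlast : ∀ y ∈ (p.edges.map cU).getLast?, y ≠ 1 := by
          intro y hy
          apply head_col p.reverse hp.reverse hMLa'
            (by rw [Sym2.eq_swap]; exact hMaa') y
          rw [SimpleGraph.Walk.edges_reverse, List.map_reverse, List.head?_reverse]
          exact hy
        have hinner := SimpleGraph.Walk.map_isPath_of_injective hψinj hp
        have hx'sup : x' ∉ (p.map ψ).support := by
          rw [SimpleGraph.Walk.support_map]
          intro hmem
          rw [List.mem_map] at hmem
          obtain ⟨t, -, ht⟩ := hmem
          exact hx' (ht ▸ t.2)
        have hadj2 : G.Adj (↑a') x' := hxa'.symm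
        have hcat := isPath_concat hinner hadj2 hx'sup
        refine ⟨SimpleGraph.Walk.cons hxa ((p.map ψ).concat hadj2), ?_, ?_⟩
        · rw [SimpleGraph.Walk.cons_isPath_iff]
          refine ⟨hcat, ?_⟩
          rw [SimpleGraph.Walk.support_concat, List.mem_append]
          rintro (hmem | hmem)
          · rw [SimpleGraph.Walk.support_map, List.mem_map] at hmem
            obtain ⟨t, -, ht⟩ := hmem
            exact hx (ht ▸ t.2)
          · rw [List.mem_singleton] at hmem
            exact hxx' hmem
        · rw [SimpleGraph.Walk.edges_cons, SimpleGraph.Walk.edges_concat,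
            List.concat_eq_append, List.map_cons, List.map_append, hmapcol p,
            List.Chain', List.isChain_cons]
          have hc2 : cV s(↑a', x') = 1 := by
            rw [Sym2.eq_swap]
            exact hcV_out x' ↑a' hx'
          have hnonnil : p.edges.map cU ≠ [] := by
            cases p with
            | nil => exact absurd rfl haa'
            | cons h₃ q₃ => simp
          constructor
          · intro y hy
            rw [List.head?_append_of_ne_nil _ hnonnil] at hy
            have hy1 := hhead y hy
            rw [hcV_out x ↑a hx]
            exact fun e => hy1 e.symm
          · rw [List.isChain_append]
            refine ⟨chain_of_proper T cU hcU_proper p hp, by simp, ?_⟩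
            intro yL hyL y2 hy2
            simp only [List.map_singleton, List.head?_cons, Option.mem_some_iff] at hy2
            intro e
            have h9 : cV s((↑a' : V), x') = 1 := by
              rw [Sym2.eq_swap]
              exact hcV_out x' ↑a' hx'
            exact hlast yL hyL ((e.trans hy2.symm).trans h9)
    intro u v huv
    by_cases hu : u ∈ U <;> by_cases hv : v ∈ U
    · obtain ⟨p, hp⟩ := hpathex ⟨u, hu⟩ ⟨v, hv⟩
      exact ⟨p.map ψ, SimpleGraph.Walk.map_isPath_of_injective hψinj hp,
        inner_chain p hp⟩
    · obtain ⟨p, hp, hc⟩ := key2 v hv ⟨u, hu⟩ (fun e => huv e.symm)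
      refine ⟨p.reverse, hp.reverse, ?_⟩
      rw [SimpleGraph.Walk.edges_reverse, List.map_reverse, List.Chain', List.isChain_reverse]
      exact List.IsChain.imp (fun a b h => h.symm) hc
    · obtain ⟨p, hp, hc⟩ := key2 u hu ⟨v, hv⟩ huv
      exact ⟨p, hp, hc⟩
    · exact key3 u v hu hv huv
  -- counting
  have hkey : pcOpt G ≤ {e | e ∈ G.edgeSet ∧ cV e ≠ 1}.ncard
      + (cV '' {e | e ∈ G.edgeSet ∧ cV e ≠ 1}).ncard :=
    Nat.sInf_le ⟨cV, hPC, rfl⟩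
  have hES : {e | e ∈ G.edgeSet ∧ cV e ≠ 1} =
      Sym2.map Subtype.val '' (T.edgeSet \ M) := by
    ext e
    constructor
    · rintro ⟨hEe, hne1⟩
      have hex : ∃ e' : Sym2 ↥U, Sym2.map Subtype.val e' = e := by
        by_contra hc
        rw [hcVdef] at hne1
        simp only [dif_neg hc] at hne1
        exact hne1 rfl
      obtain ⟨e', rfl⟩ := hex
      rw [hcV_map] at hne1
      by_cases hc1 : e' ∈ T.edgeSet
      · by_cases hc2 : e' ∈ M
        · rw [hcU_M hc2] at hne1; exact absurd rfl hne1
        · exact ⟨e', ⟨hc1, hc2⟩, rfl⟩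
      · rw [hcU_out hc1] at hne1; exact absurd rfl hne1
    · rintro ⟨e', ⟨hTe, hMe⟩, rfl⟩
      constructor
      · induction e' using Sym2.ind with
        | _ a b =>
          have : T.Adj a b := T.mem_edgeSet.mp hTe
          exact G.mem_edgeSet.mpr (hTG this)
      · rw [hcV_map, hcU_in hTe hMe]
        omega
  have hcount1 : {e | e ∈ G.edgeSet ∧ cV e ≠ 1}.ncard = T.edgeSet.ncard - M.ncard := by
    rw [hES, Set.ncard_image_of_injective _ hmapinj, Set.ncard_diff hME (Set.toFinite _)]
  have hq : (cV '' {e | e ∈ G.edgeSet ∧ cV e ≠ 1}).ncard ≤ maxDeg T := by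
    have hsub : cV '' {e | e ∈ G.edgeSet ∧ cV e ≠ 1} ⊆
        (fun k => k + 2) '' {k | k < maxDeg T} := by
      rintro n ⟨e, he, rfl⟩
      rw [hES] at he
      obtain ⟨e', ⟨hTe, hMe⟩, rfl⟩ := he
      rw [hcV_map, hcU_in hTe hMe]
      refine ⟨gcol hT r ord e', ?_, rfl⟩
      induction e' using Sym2.ind with
      | _ a b => exact gcol_lt hT r ord (T.mem_edgeSet.mp hTe)
    calc (cV '' {e | e ∈ G.edgeSet ∧ cV e ≠ 1}).ncard
        ≤ ((fun k => k + 2) '' {k | k < maxDeg T}).ncard :=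
          Set.ncard_le_ncard hsub (Set.Finite.image _ (by
            have : {k | k < maxDeg T} = ↑(Finset.range (maxDeg T)) := by ext; simp
            rw [this]; exact Set.toFinite _))
      _ = ({k | k < maxDeg T} : Set ℕ).ncard :=
          Set.ncard_image_of_injective _ (fun a b h => by omega)
      _ = maxDeg T := by
          have : {k | k < maxDeg T} = ↑(Finset.range (maxDeg T)) := by ext; simp
          rw [this, Set.ncard_coe_finset, Finset.card_range]
  have hm_le : M.ncard ≤ T.edgeSet.ncard := Set.ncard_le_ncard hME (Set.toFinite _)
  rw [hcount1] at hkey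
  omega
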